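/- Let Y be a topological space and consider Z = Y × [0,1] with the subset A = univ ×ˢ {0} (that is, A = Y × {0}). Then the homotopy link Holink(Z, A) is homotopy equivalent to Y, with the forward map of the homotopy equivalence given by the evaluation γ ↦ (first coordinate of γ(0)). -/

import Mathlib

open Set unitInterval

/-- The homotopy link of a subset `A` of a topological space `Z`: the set of continuous
paths `γ : [0,1] → Z` with `γ 0 ∈ A` and `γ t ∉ A` for all `t ≠ 0`. -/
def Holink {Z : Type*} [TopologicalSpace Z] (A : Set Z) : Set C(unitInterval, Z) :=
  {γ | γ 0 ∈ A ∧ ∀ t : unitInterval, t ≠ 0 → γ t ∉ A}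

namespace HolinkCollar

variable {Y : Type} [TopologicalSpace Y]

/-- The collar subset `Y × {0}`. -/
abbrev A (Y : Type) [TopologicalSpace Y] : Set (Y × unitInterval) :=
  (univ : Set Y) ×ˢ ({0} : Set unitInterval)

lemma mem_A {z : Y × unitInterval} : z ∈ A Y ↔ z.2 = 0 := by
  constructor
  · rintro ⟨-, h⟩; exact h
  · intro h; exact ⟨trivial, h⟩

/-- `(1 - s) * t` as an element of the unit interval. -/
def scaled (s t : unitInterval) : unitInterval :=
  ⟨(1 - (s : ℝ)) * t, by
    constructor <;> nlinarith [s.2.1, s.2.2, t.2.1, t.2.2]⟩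

/-- `(1 - s) * b + s * t` as an element of the unit interval. -/
def hsnd (s t b : unitInterval) : unitInterval :=
  ⟨(1 - (s : ℝ)) * b + s * t, by
    constructor <;> nlinarith [s.2.1, s.2.2, t.2.1, t.2.2, b.2.1, b.2.2]⟩

lemma continuous_scaled : Continuous fun p : unitInterval × unitInterval => scaled p.1 p.2 := by
  apply Continuous.subtype_mk
  fun_prop

lemma unit_pos {t : unitInterval} (ht : t ≠ 0) : (0 : ℝ) < t := by
  rcases lt_or_eq_of_le t.2.1 with h | h
  · exact h
  · exact absurd (Subtype.ext h.symm) ht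

/-- The path `t ↦ (y, t)`. -/
def collarPath (y : Y) : C(unitInterval, Y × unitInterval) :=
  ⟨fun t => (y, t), by continuity⟩

lemma collarPath_mem (y : Y) : collarPath y ∈ Holink (A Y) := by
  constructor
  · simp [collarPath, mem_A]
  · intro t ht h
    exact ht (mem_A.mp h)

/-- The backward map `Y → Holink`. -/
def g : C(Y, Holink (A Y)) :=
  ⟨fun y => ⟨collarPath y, collarPath_mem y⟩, by
    apply Continuous.subtype_mk
    apply ContinuousMap.continuous_of_continuous_uncurry
    exact continuous_fst.prodMk continuous_snd⟩

/-- The forward map: evaluation. -/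
def f : C(Holink (A Y), Y) :=
  ⟨fun γ => (γ.1 0).1,
    continuous_fst.comp ((continuous_eval_const 0).comp continuous_subtype_val)⟩

/-- The underlying family of paths for the homotopy. -/
def K (p : unitInterval × (Holink (A Y))) : C(unitInterval, Y × unitInterval) :=
  ⟨fun t => ((p.2.1 (scaled p.1 t)).1, hsnd p.1 t ((p.2.1 t).2)), by
    apply Continuous.prodMk
    · exact continuous_fst.comp
        (p.2.1.continuous.comp (continuous_scaled.comp (continuous_const.prodMk continuous_id)))
    · apply Continuous.subtype_mk
      have hc : Continuous fun t : unitInterval => ((p.2.1 t).2 : ℝ) := by fun_prop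
      fun_prop⟩

lemma K_mem (p : unitInterval × (Holink (A Y))) : K p ∈ Holink (A Y) := by
  obtain ⟨s, γ⟩ := p
  have h0 : ((γ.1 0).2 : ℝ) = 0 := by
    have := γ.2.1
    rw [mem_A] at this
    exact congrArg Subtype.val this
  constructor
  · rw [mem_A]
    show hsnd s 0 ((γ.1 0).2) = 0
    apply Subtype.ext
    simp [hsnd, h0]
  · intro t ht hmem
    rw [mem_A] at hmem
    have hval : ((1 : ℝ) - s) * ((γ.1 t).2 : ℝ) + s * t = 0 := congrArg Subtype.val hmem
    have htpos : (0 : ℝ) < t := unit_pos ht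
    have hb : (γ.1 t).2 ≠ 0 := by
      intro hb0
      exact γ.2.2 t ht (mem_A.mpr hb0)
    have hbpos : (0 : ℝ) < (γ.1 t).2 := unit_pos hb
    rcases lt_or_eq_of_le s.2.2 with hs | hs
    · nlinarith [s.2.1]
    · nlinarith [s.2.1]

/-- The homotopy from the identity to `g ∘ f`. -/
def Hty : (ContinuousMap.id (Holink (A Y))).Homotopy (g.comp f) where
  toFun p := ⟨K p, K_mem p⟩
  continuous_toFun := by
    apply Continuous.subtype_mk
    apply ContinuousMap.continuous_of_continuous_uncurry
    apply Continuous.prodMk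
    · apply continuous_fst.comp
      have : Continuous fun q : (unitInterval × (Holink (A Y))) × unitInterval =>
          ((q.1.2.1 : C(unitInterval, Y × unitInterval)), scaled q.1.1 q.2) := by
        apply Continuous.prodMk
        · exact continuous_subtype_val.comp (continuous_snd.comp continuous_fst)
        · exact continuous_scaled.comp
            ((continuous_fst.comp continuous_fst).prodMk continuous_snd)
      exact continuous_eval.comp this
    · apply Continuous.subtype_mk
      have hb : Continuous fun q : (unitInterval × (Holink (A Y))) × unitInterval =>
          (((q.1.2.1 : C(unitInterval, Y × unitInterval)) q.2).2 : ℝ) := by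
        apply continuous_induced_dom.comp
        apply continuous_snd.comp
        have : Continuous fun q : (unitInterval × (Holink (A Y))) × unitInterval =>
            ((q.1.2.1 : C(unitInterval, Y × unitInterval)), q.2) := by
          exact (continuous_subtype_val.comp (continuous_snd.comp continuous_fst)).prodMk
            continuous_snd
        exact continuous_eval.comp this
      fun_prop
  map_zero_left γ := by
    apply Subtype.ext
    ext t
    · show (γ.1 (scaled 0 t)).1 = (γ.1 t).1
      congr 1
      congr 1
      apply Subtype.ext
      simp [scaled]
    · show (hsnd 0 t ((γ.1 t).2) : ℝ) = ((γ.1 t).2 : ℝ)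
      simp [hsnd]
  map_one_left γ := by
    apply Subtype.ext
    ext t
    · show (γ.1 (scaled 1 t)).1 = (γ.1 0).1
      congr 1
      congr 1
      apply Subtype.ext
      simp [scaled]
    · show (hsnd 1 t ((γ.1 t).2) : ℝ) = (t : ℝ)
      simp [hsnd]

end HolinkCollar

/-- For the collared pair `(Y × [0,1], Y × {0})`, the homotopy link is homotopy
equivalent to `Y`, with the forward map given by evaluation `γ ↦ (γ 0).1`. -/
theorem holink_collar_homotopyEquiv_base
    {Y : Type} [TopologicalSpace Y] :
    ∃ h : ContinuousMap.HomotopyEquiv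
        (Holink ((univ : Set Y) ×ˢ ({0} : Set unitInterval))) Y,
      ∀ γ : Holink ((univ : Set Y) ×ˢ ({0} : Set unitInterval)),
        h.toFun γ = (γ.1 0).1 := by
  refine ⟨⟨HolinkCollar.f, HolinkCollar.g, ⟨HolinkCollar.Hty.symm⟩, ?_⟩, fun γ => rfl⟩
  have h : HolinkCollar.f.comp HolinkCollar.g = ContinuousMap.id Y := by
    ext y; rfl
  rw [h]
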